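/- arXiv:1504.05283 — 2 statements merged into one kernel-verified Lean document; each statement's English description precedes it below -/
import Mathlib

section
/- Let g ~ Gamma(M, 1) for integer M ≥ 1 and I ≥ 0 independent of g with all moments E[I^n e^{-sI}] finite. Then the outage probability satisfies Pr(g ≤ s·I) = Σ_{n=M}^∞ (s^n/n!) E[I^n e^{-s I}] for s > 0, where the series converges. -/
open MeasureTheory ProbabilityTheory
open scoped BigOperators

open Set Finset in
private lemma expPartial_hasDerivAt (N : ℕ) (x : ℝ) :
    HasDerivAt (fun x : ℝ => Real.exp (-x) * ∑ k ∈ Finset.range (N + 1),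
        x ^ k / (Nat.factorial k))
      (-(Real.exp (-x) * x ^ N / (Nat.factorial N))) x := by
  have hP : HasDerivAt (fun x : ℝ => ∑ k ∈ Finset.range (N + 1), x ^ k / (Nat.factorial k))
      (∑ k ∈ Finset.range N, x ^ k / (Nat.factorial k)) x := by
    have h1 : HasDerivAt (fun x : ℝ => ∑ k ∈ Finset.range (N + 1), x ^ k / (Nat.factorial k))
        (∑ k ∈ Finset.range (N + 1), (k : ℝ) * x ^ (k - 1) / (Nat.factorial k)) x := by
      apply HasDerivAt.fun_sum
      intro k _
      exact (hasDerivAt_pow k x).div_const _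
    have h2 : (∑ k ∈ Finset.range (N + 1), (k : ℝ) * x ^ (k - 1) / (Nat.factorial k))
        = ∑ k ∈ Finset.range N, x ^ k / (Nat.factorial k) := by
      rw [Finset.sum_range_succ']
      simp only [Nat.cast_zero, zero_mul, Nat.factorial_zero, Nat.cast_one, zero_div, add_zero]
      refine Finset.sum_congr rfl fun k _ => ?_
      rw [Nat.factorial_succ]
      have : ((k + 1 : ℕ) : ℝ) ≠ 0 := by positivity
      push_cast
      field_simp
    rwa [h2] at h1
  have hE : HasDerivAt (fun x : ℝ => Real.exp (-x)) (Real.exp (-x) * (-1)) x :=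
    (hasDerivAt_neg x).exp
  have := hE.fun_mul hP
  refine this.congr_deriv ?_
  rw [Finset.sum_range_succ]
  ring

open Set Finset in
private lemma gamma_integral_eq (N : ℕ) {t : ℝ} (ht : 0 ≤ t) :
    ∫ x in (0:ℝ)..t, x ^ N * Real.exp (-x) / (Nat.factorial N)
      = 1 - Real.exp (-t) * ∑ k ∈ Finset.range (N + 1), t ^ k / (Nat.factorial k) := by
  have hderiv : ∀ x ∈ Set.uIcc (0:ℝ) t,
      HasDerivAt (fun x : ℝ => -(Real.exp (-x) * ∑ k ∈ Finset.range (N + 1),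
          x ^ k / (Nat.factorial k)))
        (x ^ N * Real.exp (-x) / (Nat.factorial N)) x := by
    intro x _
    have := (expPartial_hasDerivAt N x).neg
    refine this.congr_deriv ?_
    ring
  have hcont : IntervalIntegrable (fun x : ℝ => x ^ N * Real.exp (-x) / (Nat.factorial N))
      MeasureTheory.volume 0 t := by
    apply Continuous.intervalIntegrable
    continuity
  have := intervalIntegral.integral_eq_sub_of_hasDerivAt hderiv hcont
  rw [this]
  have h0 : (∑ k ∈ Finset.range (N + 1), (0:ℝ) ^ k / (Nat.factorial k)) = 1 := by
    rw [Finset.sum_range_succ']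
    simp
  rw [h0]
  simp [Real.exp_zero]
  ring

open Set in
private lemma gammaMeasure_Iic (M : ℕ) (hM : 1 ≤ M) {t : ℝ} (ht : 0 ≤ t) :
    gammaMeasure (M : ℝ) 1 (Set.Iic t)
      = ENNReal.ofReal (1 - Real.exp (-t) * ∑ k ∈ Finset.range M,
          t ^ k / (Nat.factorial k)) := by
  obtain ⟨N, rfl⟩ : ∃ N, M = N + 1 := ⟨M - 1, (Nat.succ_pred_eq_of_pos hM).symm⟩
  rw [gammaMeasure, withDensity_apply _ measurableSet_Iic,
    lintegral_Iic_eq_lintegral_Iio_add_Icc _ ht, lintegral_gammaPDF_of_nonpos le_rfl, zero_add]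
  have hIoc : (∫⁻ x in Set.Icc (0:ℝ) t, gammaPDF (N + 1 : ℕ) 1 x)
      = ∫⁻ x in Set.Ioc (0:ℝ) t, gammaPDF (N + 1 : ℕ) 1 x :=
    (setLIntegral_congr Ioc_ae_eq_Icc).symm
  rw [hIoc]
  have hpdf : ∀ x ∈ Set.Ioc (0:ℝ) t, gammaPDF (N + 1 : ℕ) 1 x
      = ENNReal.ofReal (x ^ N * Real.exp (-x) / (Nat.factorial N)) := by
    intro x hx
    rw [gammaPDF_of_nonneg hx.1.le]
    congr 1
    have hG : Real.Gamma ((N + 1 : ℕ) : ℝ) = (Nat.factorial N : ℝ) := by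
      rw [Nat.cast_add, Nat.cast_one, Real.Gamma_nat_eq_factorial]
    have hrpow : x ^ (((N + 1 : ℕ) : ℝ) - 1) = x ^ N := by
      have : (((N + 1 : ℕ) : ℝ) - 1) = (N : ℝ) := by push_cast; ring
      rw [this, Real.rpow_natCast]
    rw [hG, hrpow, Real.one_rpow, one_mul]
    ring
  rw [setLIntegral_congr_fun measurableSet_Ioc hpdf]
  have hint : IntegrableOn (fun x : ℝ => x ^ N * Real.exp (-x) / (Nat.factorial N))
      (Set.Ioc (0:ℝ) t) MeasureTheory.volume := by
    apply Continuous.integrableOn_Ioc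
    continuity
  rw [← ofReal_integral_eq_lintegral_ofReal hint
    ((ae_restrict_iff' measurableSet_Ioc).2 (ae_of_all _ fun x hx => by
      have h1 := hx.1.le; positivity))]
  congr 1
  rw [← intervalIntegral.integral_of_le ht]
  exact gamma_integral_eq N ht

private lemma tail_series (M : ℕ) (t : ℝ) :
    1 - Real.exp (-t) * ∑ k ∈ Finset.range M, t ^ k / (Nat.factorial k)
      = ∑' j : ℕ, t ^ (M + j) * Real.exp (-t) / (Nat.factorial (M + j)) := by
  have hsum := Real.summable_pow_div_factorial t
  have hexp : Real.exp t = ∑' n : ℕ, t ^ n / (Nat.factorial n) := by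
    rw [Real.exp_eq_exp_ℝ, NormedSpace.exp_eq_tsum_div]
  have htail := Summable.sum_add_tsum_nat_add (f := fun n : ℕ => t ^ n / (Nat.factorial n)) M hsum
  have h1 : (∑' j : ℕ, t ^ (j + M) / (Nat.factorial (j + M)))
      = Real.exp t - ∑ k ∈ Finset.range M, t ^ k / (Nat.factorial k) := by
    rw [hexp]; linarith [htail]
  have h2 : (∑' j : ℕ, t ^ (M + j) * Real.exp (-t) / (Nat.factorial (M + j)))
      = (∑' j : ℕ, t ^ (j + M) / (Nat.factorial (j + M))) * Real.exp (-t) := by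
    rw [← tsum_mul_right]
    refine tsum_congr fun j => ?_
    rw [add_comm M j]
    ring
  rw [h2, h1, sub_mul, ← Real.exp_add]
  simp [mul_comm]

private lemma tail_summable (M : ℕ) (t : ℝ) :
    Summable (fun j : ℕ => t ^ (M + j) * Real.exp (-t) / (Nat.factorial (M + j))) := by
  have hsum := (summable_nat_add_iff (f := fun n : ℕ => t ^ n / (Nat.factorial n)) M).2
    (Real.summable_pow_div_factorial t)
  refine ((hsum.mul_right (Real.exp (-t))).congr fun j => ?_)
  rw [add_comm j M]
  ring

set_option maxHeartbeats 1000000 in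
/-- If `g ~ Gamma(M,1)` (integer `M ≥ 1`) is independent of a nonnegative random
variable `I` with all moments `E[I^n e^{-sI}]` finite, then for `s > 0` the outage
probability satisfies `Pr(g ≤ s·I) = ∑_{n=M}^∞ (s^n/n!) E[I^n e^{-sI}]`, where the
series converges. -/
theorem outage_series (Ω : Type*) [MeasurableSpace Ω] (μ : Measure Ω)
    [IsProbabilityMeasure μ] (M : ℕ) (hM : 1 ≤ M) (s : ℝ) (hs : 0 < s)
    (g I : Ω → ℝ) (hgm : Measurable g) (hIm : Measurable I)
    (hI : ∀ ω, 0 ≤ I ω)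
    (hindep : IndepFun g I μ)
    (hg : μ.map g = gammaMeasure (M : ℝ) 1)
    (hint : ∀ n : ℕ, Integrable (fun ω => I ω ^ n * Real.exp (-s * I ω)) μ) :
    Summable (fun j : ℕ =>
        s ^ (M + j) / (Nat.factorial (M + j))
          * ∫ ω, I ω ^ (M + j) * Real.exp (-s * I ω) ∂μ) ∧
    (μ {ω | g ω ≤ s * I ω}).toReal
      = ∑' j : ℕ, s ^ (M + j) / (Nat.factorial (M + j))
          * ∫ ω, I ω ^ (M + j) * Real.exp (-s * I ω) ∂μ := by
  -- notation for terms of the series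
  set b : ℕ → ℝ := fun j => s ^ (M + j) / (Nat.factorial (M + j))
      * ∫ ω, I ω ^ (M + j) * Real.exp (-s * I ω) ∂μ with hb
  have hbnn : ∀ j, 0 ≤ b j := by
    intro j
    apply mul_nonneg (by positivity)
    apply integral_nonneg
    intro ω
    have := hI ω
    positivity
  -- Step A: reduce to an lintegral of the Gamma CDF
  have hmap : μ.map (fun ω => (I ω, g ω)) = (μ.map I).prod (μ.map g) :=
    (indepFun_iff_map_prod_eq_prod_map_map hIm.aemeasurable hgm.aemeasurable).1 hindep.symm
  have hSmeas : MeasurableSet {p : ℝ × ℝ | p.2 ≤ s * p.1} :=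
    measurableSet_le measurable_snd (measurable_fst.const_mul s)
  have hkey : μ {ω | g ω ≤ s * I ω}
      = ∫⁻ ω, gammaMeasure (M : ℝ) 1 (Set.Iic (s * I ω)) ∂μ := by
    have h1 : {ω | g ω ≤ s * I ω}
        = (fun ω => (I ω, g ω)) ⁻¹' {p : ℝ × ℝ | p.2 ≤ s * p.1} := rfl
    rw [h1, ← Measure.map_apply (hIm.prodMk hgm) hSmeas, hmap,
      Measure.prod_apply hSmeas]
    have h2 : ∀ x : ℝ, (Prod.mk x ⁻¹' {p : ℝ × ℝ | p.2 ≤ s * p.1}) = Set.Iic (s * x) := by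
      intro x; rfl
    simp_rw [h2, hg]
    rw [lintegral_map ?_ hIm]
    have hmono : Monotone (fun t : ℝ => gammaMeasure (M : ℝ) 1 (Set.Iic t)) :=
      fun a c h => measure_mono (Set.Iic_subset_Iic.mpr h)
    exact hmono.measurable.comp (measurable_const_mul s)
  -- Step B: pointwise series expansion of the CDF
  have hpt : ∀ ω, gammaMeasure (M : ℝ) 1 (Set.Iic (s * I ω))
      = ∑' j : ℕ, ENNReal.ofReal
          (s ^ (M + j) / (Nat.factorial (M + j)) * (I ω ^ (M + j) * Real.exp (-s * I ω))) := by
    intro ω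
    have ht : 0 ≤ s * I ω := mul_nonneg hs.le (hI ω)
    rw [gammaMeasure_Iic M hM ht, tail_series M (s * I ω),
      ENNReal.ofReal_tsum_of_nonneg (fun j => by positivity) (tail_summable M (s * I ω))]
    refine tsum_congr fun j => ?_
    congr 1
    rw [mul_pow, neg_mul]
    ring
  simp_rw [hpt] at hkey
  -- Step C: swap lintegral and tsum
  rw [lintegral_tsum (fun j => by
    apply Measurable.aemeasurable
    apply Measurable.ennreal_ofReal
    exact (((hIm.pow_const _).mul ((hIm.const_mul (-s)).exp)).const_mul _))] at hkey
  -- Step D: evaluate each lintegral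
  have hterm : ∀ j : ℕ, (∫⁻ ω, ENNReal.ofReal
      (s ^ (M + j) / (Nat.factorial (M + j)) * (I ω ^ (M + j) * Real.exp (-s * I ω))) ∂μ)
      = ENNReal.ofReal (b j) := by
    intro j
    rw [← ofReal_integral_eq_lintegral_ofReal (((hint (M + j)).const_mul _))
      (ae_of_all _ fun ω => by have := hI ω; positivity)]
    rw [hb]
    simp only
    rw [integral_const_mul]
  simp_rw [hterm] at hkey
  -- Step E: conclude
  have hne : (∑' j : ℕ, ENNReal.ofReal (b j)) ≠ ⊤ := by
    rw [← hkey]; exact measure_ne_top μ _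
  have hsummable : Summable b := by
    have := ENNReal.summable_toReal hne
    refine this.congr fun j => ?_
    simp [ENNReal.toReal_ofReal (hbnn j)]
  refine ⟨hsummable, ?_⟩
  rw [hkey, ENNReal.tsum_toReal_eq (fun j => ENNReal.ofReal_ne_top)]
  exact tsum_congr fun j => ENNReal.toReal_ofReal (hbnn j)
end

section
/- Let Z₁, Z₂ be independent with densities f_{Z_j}(z) = 2πλ_j z e^{−πλ_j z²} (nearest-point distances of independent PPPs of intensities λ₁, λ₂). For α₁, α₂ > 2 and P₁, P₂ > 0, conditioned on the event E₁ = {P₁ Z₁^{−α₁} ≥ P₂ Z₂^{−α₂}} (which has probability A₁ > 0), the conditional density of Z₁ is f_{Y₁}(y) = (2πλ₁/A₁) y exp( −π( λ₁ y² + λ₂ (P₂/P₁)^{2/α₂} y^{2α₁/α₂} ) ). -/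
open MeasureTheory ProbabilityTheory
open scoped Real
open Set Filter
open scoped Topology ENNReal

private lemma aux_surv {Ω : Type*} [MeasurableSpace Ω] (μ : Measure Ω) [IsProbabilityMeasure μ]
    (lam : ℝ) (Z : Ω → ℝ) (hZm : Measurable Z)
    (hlaw : ∀ z : ℝ, 0 ≤ z → μ {ω | z < Z ω} = ENNReal.ofReal (Real.exp (-(π * lam * z ^ 2))))
    {s : ℝ} (hs : 0 < s) :
    μ {ω | s ≤ Z ω} = ENNReal.ofReal (Real.exp (-(π * lam * s ^ 2))) := by
  set g : ℕ → ℝ := fun n => s - s / (n + 1) with hg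
  have hg0 : ∀ n, 0 ≤ g n := fun n => by
    have : s / ((n : ℝ) + 1) ≤ s := div_le_self hs.le (by push_cast; linarith [Nat.cast_nonneg (α := ℝ) n])
    simp [hg]; linarith
  have hglt : ∀ n, g n < s := fun n => by
    have : 0 < s / (n + 1 : ℝ) := by positivity
    simp [hg]; linarith
  have hmono : Monotone g := by
    intro n m hnm
    have : s / (m + 1 : ℝ) ≤ s / (n + 1 : ℝ) :=
      div_le_div_of_nonneg_left hs.le (by positivity) (by exact_mod_cast by omega)
    simp [hg]; linarith
  have htend : Tendsto g atTop (𝓝 s) := by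
    have h0 : Tendsto (fun n : ℕ => s / ((n : ℝ) + 1)) atTop (𝓝 0) := by
      simpa [div_eq_mul_inv] using tendsto_one_div_add_atTop_nhds_zero_nat.const_mul s
    simpa using tendsto_const_nhds.sub h0
  have hset : {ω | s ≤ Z ω} = ⋂ n, {ω | g n < Z ω} := by
    ext ω
    simp only [mem_setOf_eq, mem_iInter]
    constructor
    · intro h n; exact lt_of_lt_of_le (hglt n) h
    · intro h; exact le_of_tendsto htend (Eventually.of_forall fun n => (h n).le)
  have h1 : Tendsto (μ ∘ fun n => {ω | g n < Z ω}) atTop (𝓝 (μ (⋂ n, {ω | g n < Z ω}))) :=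
    tendsto_measure_iInter_atTop
      (fun n => (measurableSet_lt measurable_const hZm).nullMeasurableSet)
      (fun n m hnm ω hω => lt_of_le_of_lt (hmono hnm) hω) ⟨0, measure_ne_top μ _⟩
  have h1' : Tendsto (fun n => ENNReal.ofReal (Real.exp (-(π * lam * g n ^ 2)))) atTop
      (𝓝 (μ (⋂ n, {ω | g n < Z ω}))) := by
    refine h1.congr fun n => ?_
    exact (hlaw _ (hg0 n))
  have hcont : Continuous fun x : ℝ => ENNReal.ofReal (Real.exp (-(π * lam * x ^ 2))) :=
    ENNReal.continuous_ofReal.comp (by fun_prop)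
  have h2 : Tendsto (fun n => ENNReal.ofReal (Real.exp (-(π * lam * g n ^ 2)))) atTop
      (𝓝 (ENNReal.ofReal (Real.exp (-(π * lam * s ^ 2))))) :=
    (hcont.tendsto s).comp htend
  rw [hset]
  exact tendsto_nhds_unique h1' h2

private lemma aux_density {Ω : Type*} [MeasurableSpace Ω] (μ : Measure Ω) [IsProbabilityMeasure μ]
    (lam : ℝ) (hlam : 0 < lam) (Z : Ω → ℝ) (hZm : Measurable Z) (hZpos : ∀ ω, 0 < Z ω)
    (hlaw : ∀ z : ℝ, 0 ≤ z → μ {ω | z < Z ω} = ENNReal.ofReal (Real.exp (-(π * lam * z ^ 2)))) :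
    μ.map Z = MeasureTheory.volume.withDensity
      (Set.indicator (Set.Ioi 0) fun z =>
        ENNReal.ofReal (2 * π * lam * z * Real.exp (-(π * lam * z ^ 2)))) := by
  have hderiv : ∀ z : ℝ, HasDerivAt (fun z => -Real.exp (-(π * lam * z ^ 2)))
      (2 * π * lam * z * Real.exp (-(π * lam * z ^ 2))) z := by
    intro z
    have h1 : HasDerivAt (fun z : ℝ => -(π * lam * z ^ 2)) (-(π * lam * (2 * z))) z := by
      simpa [mul_comm, mul_assoc, Pi.neg_def] using ((hasDerivAt_pow 2 z).const_mul (π * lam)).neg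
    have h2 := (Real.hasDerivAt_exp _).comp z h1
    have h3 := h2.fun_neg
    exact h3.congr_deriv (by ring)
  have hFTC : ∀ a b : ℝ, a ≤ b →
      ∫ z in a..b, 2 * π * lam * z * Real.exp (-(π * lam * z ^ 2))
        = Real.exp (-(π * lam * a ^ 2)) - Real.exp (-(π * lam * b ^ 2)) := by
    intro a b hab
    have := intervalIntegral.integral_eq_sub_of_hasDerivAt
      (f := fun z => -Real.exp (-(π * lam * z ^ 2))) (fun z _ => hderiv z)
      (Continuous.intervalIntegrable (by fun_prop) a b)
    rw [this]; ring
  have hmeasd : Measurable (Set.indicator (Set.Ioi 0) fun z : ℝ =>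
      ENNReal.ofReal (2 * π * lam * z * Real.exp (-(π * lam * z ^ 2)))) :=
    (Measurable.indicator (by fun_prop) measurableSet_Ioi)
  haveI : IsProbabilityMeasure (μ.map Z) := Measure.isProbabilityMeasure_map hZm.aemeasurable
  refine Measure.ext_of_Ioc _ _ fun a b hab => ?_
  rw [Measure.map_apply hZm measurableSet_Ioc,
    withDensity_apply _ measurableSet_Ioc, lintegral_indicator measurableSet_Ioi _,
    Measure.restrict_restrict measurableSet_Ioi, Set.inter_comm, Set.Ioc_inter_Ioi]
  rcases le_or_gt b 0 with hb | hb
  · have h1 : Z ⁻¹' Set.Ioc a b = ∅ := by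
      ext ω; simp only [mem_preimage, mem_Ioc, mem_empty_iff_false, iff_false, not_and, not_le]
      intro _; exact lt_of_le_of_lt hb (hZpos ω)
    have h2 : Set.Ioc (a ⊔ 0) b = (∅ : Set ℝ) :=
      Set.Ioc_eq_empty (by simp only [not_lt]; exact hb.trans le_sup_right)
    rw [h1, h2]; simp
  · set a' := a ⊔ 0 with ha'
    have ha'0 : 0 ≤ a' := le_sup_right
    have ha'b : a' ≤ b := sup_le hab.le hb.le
    have h1 : Z ⁻¹' Set.Ioc a b = {ω | a' < Z ω} \ {ω | b < Z ω} := by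
      ext ω
      simp only [mem_preimage, mem_Ioc, mem_diff, mem_setOf_eq, not_lt, ha', sup_lt_iff]
      exact ⟨fun ⟨h, h'⟩ => ⟨⟨h, hZpos ω⟩, h'⟩, fun ⟨⟨h, _⟩, h'⟩ => ⟨h, h'⟩⟩
    have hsub : {ω | b < Z ω} ⊆ {ω | a' < Z ω} := fun ω hω => lt_of_le_of_lt ha'b hω
    rw [h1, measure_diff hsub ((measurableSet_lt measurable_const hZm).nullMeasurableSet)
      (measure_ne_top μ _), hlaw _ ha'0, hlaw _ (ha'0.trans ha'b),
      ← ENNReal.ofReal_sub _ (Real.exp_nonneg _)]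
    have hint : IntegrableOn (fun z => 2 * π * lam * z * Real.exp (-(π * lam * z ^ 2)))
        (Set.Ioc a' b) := Continuous.integrableOn_Ioc (by fun_prop)
    have hnn : 0 ≤ᵐ[MeasureTheory.volume.restrict (Set.Ioc a' b)]
        fun z => 2 * π * lam * z * Real.exp (-(π * lam * z ^ 2)) := by
      refine (ae_restrict_mem measurableSet_Ioc).mono fun x hx => ?_
      have hx0 : 0 ≤ x := le_of_lt (lt_of_le_of_lt ha'0 hx.1)
      positivity
    rw [← ofReal_integral_eq_lintegral_ofReal hint hnn,
      ← intervalIntegral.integral_of_le ha'b, hFTC a' b ha'b]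


/-- Conditional serving-distance density of a macro-user: if `Z₁, Z₂` are independent
nearest-point distances of PPPs of intensities `λ₁, λ₂` (so `Pr(Z_j > z) = e^{-πλ_j z²}`),
then conditioned on the macro-association event
`E₁ = {P₁ Z₁^{-α₁} ≥ P₂ Z₂^{-α₂}}` (of probability `A₁ > 0`), the density of `Z₁` is
`f_{Y₁}(y) = (2πλ₁/A₁) y exp(-π(λ₁ y² + λ₂ (P₂/P₁)^{2/α₂} y^{2α₁/α₂}))`. -/
theorem macro_serving_distance_density
    (Ω : Type*) [MeasurableSpace Ω] (μ : Measure Ω) [IsProbabilityMeasure μ]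
    (α₁ α₂ P₁ P₂ lam₁ lam₂ A₁ : ℝ)
    (hα₁ : 2 < α₁) (hα₂ : 2 < α₂) (hP₁ : 0 < P₁) (hP₂ : 0 < P₂)
    (hlam₁ : 0 < lam₁) (hlam₂ : 0 < lam₂)
    (Z₁ Z₂ : Ω → ℝ) (hZ₁m : Measurable Z₁) (hZ₂m : Measurable Z₂)
    (hZ₁pos : ∀ ω, 0 < Z₁ ω) (hZ₂pos : ∀ ω, 0 < Z₂ ω)
    (hindep : IndepFun Z₁ Z₂ μ)
    (hZ₁law : ∀ z : ℝ, 0 ≤ z →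
      μ {ω | z < Z₁ ω} = ENNReal.ofReal (Real.exp (-(π * lam₁ * z ^ 2))))
    (hZ₂law : ∀ z : ℝ, 0 ≤ z →
      μ {ω | z < Z₂ ω} = ENNReal.ofReal (Real.exp (-(π * lam₂ * z ^ 2))))
    (hA₁ : μ {ω | P₂ * Z₂ ω ^ (-α₂) ≤ P₁ * Z₁ ω ^ (-α₁)} = ENNReal.ofReal A₁)
    (hA₁pos : 0 < A₁) :
    ∀ t : ℝ, 0 ≤ t →
      (μ ({ω | P₂ * Z₂ ω ^ (-α₂) ≤ P₁ * Z₁ ω ^ (-α₁)} ∩ {ω | Z₁ ω ≤ t})).toReal / A₁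
        = ∫ y in Set.Ioc (0 : ℝ) t,
            (2 * π * lam₁ / A₁) * y *
              Real.exp (-(π * (lam₁ * y ^ 2
                + lam₂ * (P₂ / P₁) ^ (2 / α₂) * y ^ (2 * α₁ / α₂)))) := by
  intro t ht
  have hα₂0 : (0:ℝ) < α₂ := by linarith
  have hα₁0 : (0:ℝ) < α₁ := by linarith
  set c : ℝ := (P₂ / P₁) ^ (2 / α₂) with hc
  set β : ℝ := 2 * α₁ / α₂ with hβ
  have hβ0 : 0 ≤ β := by positivity
  -- the threshold function
  set g : ℝ → ℝ := fun x => ((P₂ / P₁) * x ^ α₁) ^ (1 / α₂) with hgdef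
  have hgpos : ∀ x : ℝ, 0 < x → 0 < g x := fun x hx => by
    have : 0 < (P₂ / P₁) * x ^ α₁ := by positivity
    exact Real.rpow_pos_of_pos this _
  have hgsq : ∀ x : ℝ, 0 < x → g x ^ 2 = c * x ^ β := by
    intro x hx
    have hb : (0:ℝ) ≤ (P₂ / P₁) * x ^ α₁ := by positivity
    have h1 : g x ^ 2 = ((P₂ / P₁) * x ^ α₁) ^ (2 / α₂) := by
      rw [hgdef, ← Real.rpow_natCast (((P₂ / P₁) * x ^ α₁) ^ (1 / α₂)) 2,
        ← Real.rpow_mul hb]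
      congr 1
      push_cast; ring
    rw [h1, Real.mul_rpow (by positivity) (by positivity), ← Real.rpow_mul hx.le, hc, hβ]
    ring_nf
  have key : ∀ x z : ℝ, 0 < x → 0 < z →
      (P₂ * z ^ (-α₂) ≤ P₁ * x ^ (-α₁) ↔ g x ≤ z) := by
    intro x z hx hz
    have hz2 : (0:ℝ) < z ^ α₂ := Real.rpow_pos_of_pos hz _
    have hx2 : (0:ℝ) < x ^ α₁ := Real.rpow_pos_of_pos hx _
    rw [Real.rpow_neg hz.le, Real.rpow_neg hx.le, ← div_eq_mul_inv, ← div_eq_mul_inv,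
      div_le_div_iff₀ hz2 hx2]
    rw [hgdef, one_div, Real.rpow_inv_le_iff_of_pos (by positivity) hz.le hα₂0,
      div_mul_eq_mul_div, div_le_iff₀ hP₁]
    constructor <;> intro h <;> linarith [h]
  -- the macro event and joint-law computation
  set S : Set (ℝ × ℝ) := {p : ℝ × ℝ | P₂ * p.2 ^ (-α₂) ≤ P₁ * p.1 ^ (-α₁) ∧ p.1 ≤ t} with hS
  have hSm : MeasurableSet S := by
    have hrw : S = {p : ℝ × ℝ | P₂ * p.2 ^ (-α₂) ≤ P₁ * p.1 ^ (-α₁)} ∩ {p : ℝ × ℝ | p.1 ≤ t} :=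
      rfl
    rw [hrw]
    exact (measurableSet_le (by fun_prop) (by fun_prop)).inter
      (measurableSet_le measurable_fst measurable_const)
  have hpair : Measurable fun ω => (Z₁ ω, Z₂ ω) := hZ₁m.prodMk hZ₂m
  have e1 : {ω | P₂ * Z₂ ω ^ (-α₂) ≤ P₁ * Z₁ ω ^ (-α₁)} ∩ {ω | Z₁ ω ≤ t}
      = (fun ω => (Z₁ ω, Z₂ ω)) ⁻¹' S := rfl
  haveI : IsProbabilityMeasure (μ.map Z₂) := Measure.isProbabilityMeasure_map hZ₂m.aemeasurable
  set f : ℝ → ℝ := fun y => 2 * π * lam₁ * y *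
      Real.exp (-(π * (lam₁ * y ^ 2 + lam₂ * c * y ^ β))) with hf
  have hfc : Continuous f := by
    have hb : Continuous fun y : ℝ => y ^ β := Real.continuous_rpow_const hβ0
    fun_prop
  have main : μ ({ω | P₂ * Z₂ ω ^ (-α₂) ≤ P₁ * Z₁ ω ^ (-α₁)} ∩ {ω | Z₁ ω ≤ t})
      = ENNReal.ofReal (∫ y in Set.Ioc (0:ℝ) t, f y) := by
    rw [e1, ← Measure.map_apply hpair hSm,
      (indepFun_iff_map_prod_eq_prod_map_map hZ₁m.aemeasurable hZ₂m.aemeasurable).mp hindep,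
      Measure.prod_apply hSm]
    set ψ : ℝ → ℝ≥0∞ := Set.indicator (Set.Ioc 0 t)
      (fun x => ENNReal.ofReal (Real.exp (-(π * (lam₂ * (c * x ^ β)))))) with hψ
    have hslice : ∀ x : ℝ, 0 < x → (μ.map Z₂) (Prod.mk x ⁻¹' S) = ψ x := by
      intro x hx
      rw [Measure.map_apply hZ₂m (hSm.preimage measurable_prodMk_left)]
      by_cases hxt : x ≤ t
      · have hset : Z₂ ⁻¹' (Prod.mk x ⁻¹' S) = {ω | g x ≤ Z₂ ω} := by
          ext ω
          simp only [mem_preimage, hS, mem_setOf_eq, hxt, and_true]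
          exact key x (Z₂ ω) hx (hZ₂pos ω)
        rw [hset, aux_surv μ lam₂ Z₂ hZ₂m hZ₂law (hgpos x hx), hψ,
          Set.indicator_of_mem (show x ∈ Set.Ioc (0:ℝ) t from ⟨hx, hxt⟩)]
        congr 2
        rw [hgsq x hx]; ring
      · have hset : Z₂ ⁻¹' (Prod.mk x ⁻¹' S) = ∅ := by
          ext ω; simp [hS, hxt]
        rw [hset, measure_empty, hψ, Set.indicator_of_notMem (fun h => hxt h.2)]
    have h0 : (μ.map Z₁) (Set.Iic 0) = 0 := by
      rw [Measure.map_apply hZ₁m measurableSet_Iic]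
      have : Z₁ ⁻¹' Set.Iic 0 = ∅ := by
        ext ω; simp [not_le.2 (hZ₁pos ω)]
      rw [this, measure_empty]
    have hae : ∀ᵐ x ∂(μ.map Z₁), (μ.map Z₂) (Prod.mk x ⁻¹' S) = ψ x := by
      rw [ae_iff]
      refine measure_mono_null (fun x hx => ?_) h0
      simp only [mem_setOf_eq] at hx
      by_contra hx0
      exact hx (hslice x (not_le.1 fun h => hx0 h))
    rw [lintegral_congr_ae hae,
      aux_density μ lam₁ hlam₁ Z₁ hZ₁m hZ₁pos hZ₁law,
      lintegral_withDensity_eq_lintegral_mul _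
        ((Measurable.indicator (by fun_prop) measurableSet_Ioi))
        (Measurable.indicator (by
          have hb : Measurable fun y : ℝ => y ^ β := (Real.continuous_rpow_const hβ0).measurable
          fun_prop) measurableSet_Ioc)]
    have hpt : (fun x => ((Set.indicator (Set.Ioi 0) fun z =>
          ENNReal.ofReal (2 * π * lam₁ * z * Real.exp (-(π * lam₁ * z ^ 2)))) * ψ) x)
        = fun x => Set.indicator (Set.Ioc 0 t) (fun x => ENNReal.ofReal (f x)) x := by
      funext x
      by_cases hx : x ∈ Set.Ioc (0:ℝ) t
      · have hx0 : (0:ℝ) ≤ x := hx.1.le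
        rw [Pi.mul_apply, hψ, Set.indicator_of_mem hx, Set.indicator_of_mem hx,
          Set.indicator_of_mem (Set.mem_Ioi.2 hx.1),
          ← ENNReal.ofReal_mul (by positivity)]
        congr 1
        rw [hf, mul_assoc, ← Real.exp_add]
        ring_nf
      · rw [Pi.mul_apply, hψ, Set.indicator_of_notMem hx, Set.indicator_of_notMem hx,
          mul_zero]
    rw [hpt, lintegral_indicator measurableSet_Ioc,
      ← ofReal_integral_eq_lintegral_ofReal (hfc.integrableOn_Ioc)
        ((ae_restrict_mem measurableSet_Ioc).mono fun x hx => by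
          have hx0 : 0 ≤ x := hx.1.le
          rw [hf]; positivity)]
  rw [main, ENNReal.toReal_ofReal (by
    refine setIntegral_nonneg measurableSet_Ioc fun y hy => ?_
    have hy0 : 0 ≤ y := hy.1.le
    rw [hf]; positivity)]
  rw [div_eq_iff (ne_of_gt hA₁pos)]
  rw [← integral_mul_const]
  refine setIntegral_congr_fun measurableSet_Ioc fun y hy => ?_
  rw [hf]
  field_simp
end
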